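/- Let r > 0, w > 0, and let T₁, T₂, t₂ > 0 with T₁, T₂ ∈ (0,1). Consider u(t₁) = r T₁ t₁ / (T₁ t₁ + T₂ t₂) − w t₁ for t₁ ≥ 0. If r T₁ / (T₂ t₂) > w, then u is maximized at t₁* = √(r T₂ t₂ / (w T₁)) − (T₂/T₁) t₂ > 0, and the maximal value equals (√(T₂ t₂ w / T₁) − √r)². -/

import Mathlib

theorem stmt7 (r w T₁ T₂ t₂ : ℝ)
    (hr : 0 < r) (hw : 0 < w)
    (hT₁ : T₁ ∈ Set.Ioo (0:ℝ) 1) (hT₂ : T₂ ∈ Set.Ioo (0:ℝ) 1) (ht₂ : 0 < t₂)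
    (h : r * T₁ / (T₂ * t₂) > w) :
    let u : ℝ → ℝ := fun t₁ => r * T₁ * t₁ / (T₁ * t₁ + T₂ * t₂) - w * t₁
    let tstar : ℝ := Real.sqrt (r * T₂ * t₂ / (w * T₁)) - (T₂ / T₁) * t₂
    0 < tstar ∧
    u tstar = (Real.sqrt (T₂ * t₂ * w / T₁) - Real.sqrt r) ^ 2 ∧
    (∀ t₁ : ℝ, 0 ≤ t₁ → u t₁ ≤ u tstar) := by
  obtain ⟨hT₁0, hT₁1⟩ := hT₁
  obtain ⟨hT₂0, hT₂1⟩ := hT₂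
  intro u tstar
  have hb0 : 0 < T₂ * t₂ := mul_pos hT₂0 ht₂
  set S1 := Real.sqrt (r * T₂ * t₂ / (w * T₁)) with hS1def
  set S2 := Real.sqrt (T₂ * t₂ * w / T₁) with hS2def
  set R := Real.sqrt r with hRdef
  have hS1nn : 0 ≤ S1 := Real.sqrt_nonneg _
  have hS2nn : 0 ≤ S2 := Real.sqrt_nonneg _
  have hRnn : 0 ≤ R := Real.sqrt_nonneg _
  have hS1sq : S1 ^ 2 = r * T₂ * t₂ / (w * T₁) := Real.sq_sqrt (by positivity)
  have hS2sq : S2 ^ 2 = T₂ * t₂ * w / T₁ := Real.sq_sqrt (by positivity)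
  have hRsq : R ^ 2 = r := Real.sq_sqrt hr.le
  have hS1sq' : w * T₁ * S1 ^ 2 = r * T₂ * t₂ := by
    rw [hS1sq]; field_simp
  have hS2sq' : T₁ * S2 ^ 2 = T₂ * t₂ * w := by
    rw [hS2sq]; field_simp
  -- key cross relation : w * S1 = S2 * R
  have hwS1 : w * S1 = S2 * R := by
    have h1 : w * S1 = Real.sqrt (w ^ 2 * (r * T₂ * t₂ / (w * T₁))) := by
      rw [Real.sqrt_mul (sq_nonneg w), Real.sqrt_sq hw.le, hS1def]
    have h2 : S2 * R = Real.sqrt ((T₂ * t₂ * w / T₁) * r) := by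
      rw [Real.sqrt_mul (by positivity), hS2def, hRdef]
    rw [h1, h2]
    congr 1
    field_simp
  -- h gives r * T₁ > w * (T₂ * t₂)
  have hkey : w * (T₂ * t₂) < r * T₁ := by
    rw [gt_iff_lt, lt_div_iff₀ hb0] at h; linarith
  have ha : (0:ℝ) ≤ T₂ / T₁ * t₂ := by positivity
  have hsqlt : (T₂ / T₁ * t₂) ^ 2 < r * T₂ * t₂ / (w * T₁) := by
    rw [lt_div_iff₀ (by positivity)]
    have e : (T₂ / T₁ * t₂) ^ 2 * (w * T₁) = T₂ * t₂ * (w * (T₂ * t₂)) / T₁ := by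
      field_simp
    rw [e, div_lt_iff₀ hT₁0]
    nlinarith [hb0, hkey, hT₁0]
  have h2 : T₂ / T₁ * t₂ < S1 := by
    rw [← hS1sq] at hsqlt
    nlinarith [hsqlt, hS1nn, ha]
  have htpos : 0 < tstar := by
    simpa [tstar] using sub_pos.mpr h2
  have hS1pos : 0 < S1 := lt_of_le_of_lt ha h2
  have htstar : tstar = S1 - T₂ / T₁ * t₂ := rfl
  have hD : T₁ * tstar + T₂ * t₂ = T₁ * S1 := by
    rw [htstar]; field_simp; ring
  have hT₁S1 : (0:ℝ) < T₁ * S1 := mul_pos hT₁0 hS1pos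
  have hval : u tstar = (S2 - R) ^ 2 := by
    show r * T₁ * tstar / (T₁ * tstar + T₂ * t₂) - w * tstar = (S2 - R) ^ 2
    rw [hD, htstar]
    rw [sub_eq_iff_eq_add, div_eq_iff (ne_of_gt hT₁S1)]
    have hT₁ne : T₁ ≠ 0 := ne_of_gt hT₁0
    field_simp
    linear_combination (-(S1)) * hS2sq' + (-(T₁ * S1)) * hRsq - 2 * T₁ * S1 * hwS1 + hS1sq'
  refine ⟨htpos, hval, ?_⟩
  intro t ht
  rw [hval]
  show r * T₁ * t / (T₁ * t + T₂ * t₂) - w * t ≤ (S2 - R) ^ 2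
  have hx : 0 < T₁ * t + T₂ * t₂ := by positivity
  rw [sub_le_iff_le_add, div_le_iff₀ hx]
  have key : T₁ * (((S2 - R) ^ 2 + w * t) * (T₁ * t + T₂ * t₂)) - T₁ * (r * T₁ * t)
      = w * ((T₁ * t + T₂ * t₂) - T₁ * S1) ^ 2 := by
    linear_combination (T₁ * t + T₂ * t₂) * hS2sq' + 2 * T₁ * (T₁ * t + T₂ * t₂) * hwS1 +
      T₁ * (T₁ * t + T₂ * t₂) * hRsq - T₁ * hS1sq'
  have hnn : 0 ≤ w * ((T₁ * t + T₂ * t₂) - T₁ * S1) ^ 2 := by positivity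
  have hle : T₁ * (r * T₁ * t) ≤ T₁ * (((S2 - R) ^ 2 + w * t) * (T₁ * t + T₂ * t₂)) := by
    linarith [key, hnn]
  exact le_of_mul_le_mul_left hle hT₁0
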